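/- The immediate consequences operator is continuous: for any ground program P and every nonempty directed set S of interpretations (directed with respect to the pointwise order), T_P(sup S) = sup { T_P(f) : f ∈ S }, where suprema of sets of interpretations are taken pointwise in Fin (n+1). -/

import Mathlib

namespace FLLP

def CL {n : ℕ} (x y : Fin (n+1)) : Fin (n+1) :=
  ⟨x.val + y.val - n, by have := x.isLt; have := y.isLt; omega⟩

def RL {n : ℕ} (j i : Fin (n+1)) : Fin (n+1) :=
  if h : i ≤ j then ⟨n, n.lt_succ_self⟩
  else ⟨n + j.val - i.val, by
    have h' : j.val < i.val := Fin.lt_def.mp (lt_of_not_ge h)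
    have := i.isLt; omega⟩

def RG {n : ℕ} (j i : Fin (n+1)) : Fin (n+1) :=
  if i ≤ j then ⟨n, n.lt_succ_self⟩ else j

inductive Body (A H : Type) : Type where
  | atom : A → Body A H
  | andG : Body A H → Body A H → Body A H
  | andL : Body A H → Body A H → Body A H
  | or   : Body A H → Body A H → Body A H
  | hedge : H → Body A H → Body A H
  deriving DecidableEq

def eval {n : ℕ} {A H : Type} (hinv : H → Fin (n+1) → Fin (n+1))
    (f : A → Fin (n+1)) : Body A H → Fin (n+1)
  | .atom a => f a
  | .andG B₁ B₂ => min (eval hinv f B₁) (eval hinv f B₂)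
  | .andL B₁ B₂ => CL (eval hinv f B₁) (eval hinv f B₂)
  | .or B₁ B₂ => max (eval hinv f B₁) (eval hinv f B₂)
  | .hedge h B => hinv h (eval hinv f B)

inductive Imp : Type where
  | luka : Imp
  | godel : Imp
  deriving DecidableEq

def tnorm {n : ℕ} : Imp → Fin (n+1) → Fin (n+1) → Fin (n+1)
  | .luka => CL
  | .godel => min

def implicator {n : ℕ} : Imp → Fin (n+1) → Fin (n+1) → Fin (n+1)
  | .luka => RL
  | .godel => RG

structure Program (n : ℕ) (A H : Type) [DecidableEq A] [DecidableEq H] : Type where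
  rules : Finset (A × Body A H × Fin (n+1) × Imp)
  facts : Finset (A × Fin (n+1))

noncomputable def TP {n : ℕ} {A H : Type} [DecidableEq A] [DecidableEq H]
    (P : Program n A H) (hinv : H → Fin (n+1) → Fin (n+1))
    (f : A → Fin (n+1)) : A → Fin (n+1) := fun a =>
  max ((P.rules.filter (fun R => R.1 = a)).sup
        (fun R => tnorm R.2.2.2 (eval hinv f R.2.1) R.2.2.1))
      ((P.facts.filter (fun F => F.1 = a)).sup (fun F => F.2))

def isModel {n : ℕ} {A H : Type} [DecidableEq A] [DecidableEq H]
    (P : Program n A H) (hinv : H → Fin (n+1) → Fin (n+1))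
    (f : A → Fin (n+1)) : Prop :=
  (∀ R ∈ P.rules, R.2.2.1 ≤ implicator R.2.2.2 (f R.1) (eval hinv f R.2.1)) ∧
  (∀ F ∈ P.facts, F.2 ≤ f F.1)


lemma CL_mono {n : ℕ} : Monotone (fun p : Fin (n+1) × Fin (n+1) => CL p.1 p.2) := by
  rintro ⟨a, b⟩ ⟨c, d⟩ ⟨h1, h2⟩
  simp only [CL]
  have h1' : a.val ≤ c.val := h1
  have h2' : b.val ≤ d.val := h2
  simp only [Fin.le_def]
  omega

lemma eval_mono {n : ℕ} {A H : Type} (hinv : H → Fin (n+1) → Fin (n+1))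
    (hmono : ∀ h, Monotone (hinv h)) {f g : A → Fin (n+1)} (hfg : f ≤ g) :
    ∀ B : Body A H, eval hinv f B ≤ eval hinv g B := by
  intro B
  induction B with
  | atom a => exact hfg a
  | andG B₁ B₂ ih₁ ih₂ => exact min_le_min ih₁ ih₂
  | andL B₁ B₂ ih₁ ih₂ => exact CL_mono (Prod.mk_le_mk.mpr ⟨ih₁, ih₂⟩)
  | or B₁ B₂ ih₁ ih₂ => exact max_le_max ih₁ ih₂
  | hedge h B ih => exact hmono h ih

lemma TP_mono {n : ℕ} {A H : Type} [DecidableEq A] [DecidableEq H]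
    (P : Program n A H) (hinv : H → Fin (n+1) → Fin (n+1))
    (hmono : ∀ h, Monotone (hinv h)) {f g : A → Fin (n+1)} (hfg : f ≤ g) :
    TP P hinv f ≤ TP P hinv g := by
  intro a
  unfold TP
  apply max_le_max _ le_rfl
  apply Finset.sup_mono_fun
  intro R _
  cases R.2.2.2 with
  | luka => exact CL_mono (Prod.mk_le_mk.mpr ⟨eval_mono hinv hmono hfg R.2.1, le_rfl⟩)
  | godel => exact min_le_min (eval_mono hinv hmono hfg R.2.1) le_rfl

theorem TP_continuous (n : ℕ) (hn : 1 ≤ n) (A H : Type) [Fintype A] [Fintype H]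
    [DecidableEq A] [DecidableEq H]
    (hinv : H → Fin (n+1) → Fin (n+1)) (hmono : ∀ h, Monotone (hinv h))
    (P : Program n A H)
    (S : Set (A → Fin (n+1))) (hne : S.Nonempty) (hdir : DirectedOn (· ≤ ·) S) :
    TP P hinv (sSup S) = sSup (TP P hinv '' S) := by
  -- S is finite, nonempty, directed ⇒ has a greatest element g
  have hfin : S.Finite := Set.toFinite S
  obtain ⟨g, hgS, hgmax⟩ : ∃ g ∈ S, ∀ z ∈ S, g ≤ z → g = z := by
    obtain ⟨g, hgS, hg⟩ := hfin.exists_maximalFor id S hne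
    exact ⟨g, hgS, fun z hz h => le_antisymm h (hg hz h)⟩
  have hgtop : ∀ f ∈ S, f ≤ g := by
    intro f hfS
    obtain ⟨z, hzS, hfz, hgz⟩ := hdir f hfS g hgS
    have : g = z := hgmax z hzS hgz
    exact this ▸ hfz
  have hsup : sSup S = g := le_antisymm (sSup_le hgtop) (le_sSup hgS)
  rw [hsup]
  refine le_antisymm (le_sSup ⟨g, hgS, rfl⟩) (sSup_le ?_)
  rintro _ ⟨f, hfS, rfl⟩
  exact TP_mono P hinv hmono (hgtop f hfS)

end FLLP
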